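/- For every real number p ≥ 2, every μ ∈ ℝ, and all vectors ξ, η in ℝ^m, ⟨(μ²+|ξ|²)^{(p-2)/2} ξ − (μ²+|η|²)^{(p-2)/2} η, ξ − η⟩ ≥ 2^{-p} |ξ − η|^p + (1/4) |μ|^{p-2} |ξ − η|². -/

import Mathlib

open Real

theorem stmt_4 (m : ℕ) (p : ℝ) (hp : 2 ≤ p) (μ : ℝ)
    (ξ η : EuclideanSpace ℝ (Fin m)) :
    (inner ℝ (((μ ^ 2 + ‖ξ‖ ^ 2) ^ ((p - 2) / 2)) • ξ -
        ((μ ^ 2 + ‖η‖ ^ 2) ^ ((p - 2) / 2)) • η) (ξ - η) : ℝ) ≥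
      (2 : ℝ) ^ (-p) * ‖ξ - η‖ ^ p + (1 / 4) * |μ| ^ (p - 2) * ‖ξ - η‖ ^ 2 := by
  set A : ℝ := (μ ^ 2 + ‖ξ‖ ^ 2) ^ ((p - 2) / 2) with hA
  set B : ℝ := (μ ^ 2 + ‖η‖ ^ 2) ^ ((p - 2) / 2) with hB
  have hq : 0 ≤ (p - 2) / 2 := by linarith
  have hμξ : (0:ℝ) ≤ μ ^ 2 + ‖ξ‖ ^ 2 := by positivity
  have hμη : (0:ℝ) ≤ μ ^ 2 + ‖η‖ ^ 2 := by positivity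
  -- algebraic identity for the inner product
  have hid : (inner ℝ (A • ξ - B • η) (ξ - η) : ℝ)
      = (A + B) / 2 * ‖ξ - η‖ ^ 2 + (A - B) / 2 * (‖ξ‖ ^ 2 - ‖η‖ ^ 2) := by
    have h1 : (inner ℝ (A • ξ - B • η) (ξ - η) : ℝ)
        = A * ‖ξ‖ ^ 2 - (A + B) * inner ℝ ξ η + B * ‖η‖ ^ 2 := by
      simp only [inner_sub_left, inner_sub_right, real_inner_smul_left,
        real_inner_self_eq_norm_sq, real_inner_comm η ξ]
      ring
    have h2 : ‖ξ - η‖ ^ 2 = ‖ξ‖ ^ 2 - 2 * inner ℝ ξ η + ‖η‖ ^ 2 :=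
      norm_sub_sq_real ξ η
    rw [h1, h2]; ring
  have hsign : 0 ≤ (A - B) / 2 * (‖ξ‖ ^ 2 - ‖η‖ ^ 2) := by
    rcases le_total (‖ξ‖ ^ 2) (‖η‖ ^ 2) with h | h
    · have hAB : A ≤ B := Real.rpow_le_rpow hμξ (by linarith) hq
      nlinarith
    · have hAB : B ≤ A := Real.rpow_le_rpow hμη (by linarith) hq
      nlinarith
  have habs : ∀ t : ℝ, 0 ≤ t → (t ^ 2) ^ ((p - 2) / 2) = t ^ (p - 2) := by
    intro t ht
    rw [← Real.rpow_natCast t 2, ← Real.rpow_mul ht]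
    norm_num
    rw [show (2:ℝ) * ((p - 2) / 2) = p - 2 by ring]
  -- lower bounds on A, B
  have hAμ : |μ| ^ (p - 2) ≤ A := by
    rw [← habs |μ| (abs_nonneg μ), sq_abs]
    exact Real.rpow_le_rpow (sq_nonneg μ) (by nlinarith [sq_nonneg ‖ξ‖]) hq
  have hBμ : |μ| ^ (p - 2) ≤ B := by
    rw [← habs |μ| (abs_nonneg μ), sq_abs]
    exact Real.rpow_le_rpow (sq_nonneg μ) (by nlinarith [sq_nonneg ‖η‖]) hq
  have hAξ : ‖ξ‖ ^ (p - 2) ≤ A := by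
    rw [← habs ‖ξ‖ (norm_nonneg ξ)]
    exact Real.rpow_le_rpow (sq_nonneg _) (by nlinarith [sq_nonneg μ]) hq
  have hBη : ‖η‖ ^ (p - 2) ≤ B := by
    rw [← habs ‖η‖ (norm_nonneg η)]
    exact Real.rpow_le_rpow (sq_nonneg _) (by nlinarith [sq_nonneg μ]) hq
  set s : ℝ := ‖ξ - η‖ with hs
  -- bound ‖ξ-η‖^(p-2) by 2^(p-2) (A + B)
  have hsmax : s ≤ 2 * max ‖ξ‖ ‖η‖ := by
    calc s ≤ ‖ξ‖ + ‖η‖ := norm_sub_le ξ η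
    _ ≤ 2 * max ‖ξ‖ ‖η‖ := by
        rcases max_cases ‖ξ‖ ‖η‖ with ⟨he, h⟩ | ⟨he, h⟩ <;> rw [he] <;> linarith
  have hsAB : s ^ (p - 2) ≤ 2 ^ (p - 2) * (A + B) := by
    calc s ^ (p - 2) ≤ (2 * max ‖ξ‖ ‖η‖) ^ (p - 2) :=
          Real.rpow_le_rpow (norm_nonneg _) hsmax (by linarith)
    _ = 2 ^ (p - 2) * (max ‖ξ‖ ‖η‖) ^ (p - 2) := by
          rw [Real.mul_rpow (by norm_num) (le_max_iff.2 (Or.inl (norm_nonneg _)))]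
    _ ≤ 2 ^ (p - 2) * (A + B) := by
          apply mul_le_mul_of_nonneg_left _ (Real.rpow_nonneg (by norm_num) _)
          rcases max_cases ‖ξ‖ ‖η‖ with ⟨he, h⟩ | ⟨he, h⟩ <;> rw [he]
          · have := Real.rpow_nonneg (norm_nonneg η) (p - 2); linarith
          · have := Real.rpow_nonneg (norm_nonneg ξ) (p - 2); linarith
  have h2 : (2:ℝ) ^ (-p) * (2:ℝ) ^ (p - 2) = 1 / 4 := by
    rw [← Real.rpow_add two_pos, show -p + (p - 2) = ((-2:ℤ):ℝ) by push_cast; ring,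
      Real.rpow_intCast]
    norm_num
  rcases eq_or_lt_of_le (norm_nonneg (ξ - η)) with h0 | hspos
  · -- ξ = η
    have hξη : ξ - η = 0 := by rwa [eq_comm, norm_eq_zero] at h0
    rw [hξη]
    simp only [inner_zero_right, ← hs]
    rw [show s = 0 from h0.symm, Real.zero_rpow (by positivity)]
    norm_num
  · -- main case
    have hsp : s ^ (p - 2) * s ^ 2 = s ^ p := by
      rw [← Real.rpow_natCast s 2, ← Real.rpow_add hspos]
      norm_num
      rfl
    have e1 : (2:ℝ) ^ (-p) * s ^ (p - 2) ≤ (1/4) * (A + B) := by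
      calc (2:ℝ) ^ (-p) * s ^ (p - 2) ≤ (2:ℝ) ^ (-p) * (2 ^ (p - 2) * (A + B)) :=
            mul_le_mul_of_nonneg_left hsAB (Real.rpow_nonneg (by norm_num) _)
      _ = (1/4) * (A + B) := by rw [← mul_assoc, h2]
    have hs2 : (0:ℝ) ≤ s ^ 2 := sq_nonneg s
    have e2 := mul_le_mul_of_nonneg_right e1 hs2
    have e2' : (2:ℝ) ^ (-p) * s ^ p ≤ 1 / 4 * (A + B) * s ^ 2 := by
      rw [← hsp, show (2:ℝ) ^ (-p) * (s ^ (p - 2) * s ^ 2)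
        = 2 ^ (-p) * s ^ (p - 2) * s ^ 2 by ring]
      exact e2
    have e3 := mul_le_mul_of_nonneg_right hAμ hs2
    have e4 := mul_le_mul_of_nonneg_right hBμ hs2
    have hA0 : (0:ℝ) ≤ A := Real.rpow_nonneg hμξ _
    have hB0 : (0:ℝ) ≤ B := Real.rpow_nonneg hμη _
    rw [ge_iff_le, hid]
    linarith [e2', e3, e4, hsign, mul_nonneg hA0 hs2, mul_nonneg hB0 hs2]
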